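/- Every positive integer n can be written in exactly one way as n = ∑_{i∈S} T(i) where S is a Tribonacci representation set; that is, for every positive integer n there exists a unique finite set S of natural numbers, all elements at least 3 and containing no three consecutive integers, with n = ∑_{i∈S} T(i). -/

import Mathlib

/-- The Tribonacci sequence: T(0)=0, T(1)=0, T(2)=1,
    T(n+3) = T(n+2) + T(n+1) + T(n). -/
def trib : ℕ → ℕ
  | 0 => 0
  | 1 => 0
  | 2 => 1
  | n + 3 => trib (n + 2) + trib (n + 1) + trib n

/-- A Tribonacci representation set: a finite set of naturals, all at least 3,
    containing no three consecutive integers. -/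
def IsTribRep (S : Finset ℕ) : Prop :=
  (∀ i ∈ S, 3 ≤ i) ∧ ∀ i : ℕ, ¬(i ∈ S ∧ i + 1 ∈ S ∧ i + 2 ∈ S)

lemma trib_add3 (n : ℕ) : trib (n + 3) = trib (n + 2) + trib (n + 1) + trib n := rfl

lemma trib_pos : ∀ k : ℕ, 0 < trib (k + 2) := by
  intro k
  induction k using Nat.strong_induction_on with
  | _ k ih =>
    match k with
    | 0 => decide
    | 1 => decide
    | m + 2 =>
      have h := ih m (by omega)
      have : trib (m + 2 + 2) = trib (m + 3) + trib (m + 2) + trib (m + 1) :=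
        trib_add3 (m + 1)
      omega

lemma trib_eq_of (a b c d : ℕ) (h1 : a = d + 3) (h2 : b = d + 2) (h3 : c = d + 1) :
    trib a = trib b + trib c + trib d := by
  rw [h1, h2, h3]; exact trib_add3 d

lemma trib_le_succ (k : ℕ) (hk : 2 ≤ k) : trib k ≤ trib (k + 1) := by
  match k, hk with
  | 2, _ => decide
  | (m + 3), _ =>
    have h := trib_eq_of (m + 3 + 1) (m + 3) (m + 2) (m + 1) rfl rfl rfl
    omega

lemma trib_mono {j k : ℕ} (hj : 2 ≤ j) (hjk : j ≤ k) : trib j ≤ trib k := by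
  induction k with
  | zero => omega
  | succ m ih =>
    rcases Nat.lt_or_ge j (m + 1) with h | h
    · exact le_trans (ih (by omega)) (trib_le_succ m (by omega))
    · have : j = m + 1 := by omega
      subst this; exact le_refl _

lemma trib_lt_succ (k : ℕ) (hk : 3 ≤ k) : trib k < trib (k + 1) := by
  match k, hk with
  | (m + 3), _ =>
    have h1 := trib_eq_of (m + 3 + 1) (m + 3) (m + 2) (m + 1) rfl rfl rfl
    have h2 := trib_pos m
    omega

lemma trib_strictmono {j k : ℕ} (hj : 3 ≤ j) (hjk : j < k) : trib j < trib k :=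
  lt_of_lt_of_le (trib_lt_succ j hj) (trib_mono (by omega) (by omega))

/-- T(k+3) ≥ k+1, so trib is unbounded. -/
lemma trib_ge (k : ℕ) : k + 1 ≤ trib (k + 3) := by
  induction k with
  | zero => decide
  | succ m ih =>
    have h := trib_lt_succ (m + 3) (by omega)
    have e : m + 1 + 3 = m + 3 + 1 := by omega
    rw [e]
    omega

lemma empty_of_small {S : Finset ℕ} (h3 : ∀ i ∈ S, 3 ≤ i) (hb : ∀ i ∈ S, i ≤ 2) :
    S = ∅ := by
  ext i
  simp only [Finset.notMem_empty, iff_false]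
  intro hi
  have := h3 i hi; have := hb i hi; omega

/-- Key bound: if all elements of a trib-rep set are ≤ m+2, the sum is < T(m+3). -/
lemma sum_lt_trib (m : ℕ) : ∀ S : Finset ℕ, IsTribRep S → (∀ i ∈ S, i ≤ m + 2) →
    ∑ i ∈ S, trib i < trib (m + 3) := by
  induction m using Nat.strong_induction_on with
  | _ m ih =>
    intro S hS hb
    obtain ⟨h3, hcons⟩ := hS
    by_cases htop : m + 2 ∈ S
    · have hm1 : 1 ≤ m := by have := h3 _ htop; omega
      by_cases hnext : m + 1 ∈ S
      · -- both m+2 and m+1 in S, so m ∉ S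
        have hm2 : 2 ≤ m := by have := h3 _ hnext; omega
        have hmnot : m ∉ S := fun hm => hcons m ⟨hm, hnext, htop⟩
        set S' := (S.erase (m + 2)).erase (m + 1) with hS'
        have hsum : ∑ i ∈ S, trib i
            = trib (m + 2) + (trib (m + 1) + ∑ i ∈ S', trib i) := by
          rw [hS',
            Finset.add_sum_erase _ trib
              (Finset.mem_erase.mpr ⟨by omega, hnext⟩),
            Finset.add_sum_erase _ trib htop]
        have hS'b : ∀ i ∈ S', i ≤ m - 1 := by
          intro i hi
          simp only [hS', Finset.mem_erase] at hi
          obtain ⟨hi1, hi2, hi3⟩ := hi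
          have := hb i hi3
          have : i ≠ m := fun h => hmnot (by rwa [h] at hi3)
          omega
        have hS'rep : IsTribRep S' := by
          constructor
          · intro i hi
            exact h3 i (Finset.mem_of_mem_erase (Finset.mem_of_mem_erase hi))
          · intro i ⟨a, b, c⟩
            exact hcons i ⟨Finset.mem_of_mem_erase (Finset.mem_of_mem_erase a),
              Finset.mem_of_mem_erase (Finset.mem_of_mem_erase b),
              Finset.mem_of_mem_erase (Finset.mem_of_mem_erase c)⟩
          -- done
        rcases Nat.lt_or_ge m 3 with hm3 | hm3
        · -- m = 2 : S' is empty
          have : m = 2 := by omega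
          subst this
          have : S' = ∅ := empty_of_small hS'rep.1 (fun i hi => by
            have := hS'b i hi; omega)
          rw [hsum, this]
          simp [trib_add3]
          decide
        · -- m ≥ 3: apply ih at m - 3
          have hbd : ∀ i ∈ S', i ≤ (m - 3) + 2 := fun i hi => by
            have := hS'b i hi; omega
          have h := ih (m - 3) (by omega) S' hS'rep hbd
          have hm3e : m - 3 + 3 = m := by omega
          rw [hm3e] at h
          have he : trib (m + 3) = trib (m + 2) + trib (m + 1) + trib m := trib_add3 m
          omega
      · -- m+2 ∈ S, m+1 ∉ S
        set S' := S.erase (m + 2) with hS'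
        have hsum : ∑ i ∈ S, trib i = trib (m + 2) + ∑ i ∈ S', trib i :=
          (Finset.add_sum_erase _ _ htop).symm
        have hS'b : ∀ i ∈ S', i ≤ m := by
          intro i hi
          simp only [hS', Finset.mem_erase] at hi
          obtain ⟨hi1, hi2⟩ := hi
          have := hb i hi2
          have : i ≠ m + 1 := fun h => hnext (by rwa [h] at hi2)
          omega
        have hS'rep : IsTribRep S' := by
          constructor
          · intro i hi; exact h3 i (Finset.mem_of_mem_erase hi)
          · intro i ⟨a, b, c⟩
            exact hcons i ⟨Finset.mem_of_mem_erase a, Finset.mem_of_mem_erase b,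
              Finset.mem_of_mem_erase c⟩
        rcases Nat.lt_or_ge m 2 with hm2 | hm2
        · -- m = 1 : S' empty
          have : m = 1 := by omega
          subst this
          have : S' = ∅ := empty_of_small hS'rep.1 (fun i hi => by
            have := hS'b i hi; omega)
          rw [hsum, this]
          decide
        · have hbd : ∀ i ∈ S', i ≤ (m - 2) + 2 := fun i hi => by
            have := hS'b i hi; omega
          have h := ih (m - 2) (by omega) S' hS'rep hbd
          have hm2e : m - 2 + 3 = m + 1 := by omega
          rw [hm2e] at h
          have he : trib (m + 3) = trib (m + 2) + trib (m + 1) + trib m := trib_add3 m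
          omega
    · -- m + 2 ∉ S
      rcases Nat.eq_zero_or_pos m with hm0 | hm0
      · subst hm0
        have : S = ∅ := empty_of_small h3 (fun i hi => by
          have := hb i hi
          have : i ≠ 2 := fun h => htop (by rwa [h] at hi)
          omega)
        rw [this]
        simpa using trib_pos 1
      · have hbd : ∀ i ∈ S, i ≤ (m - 1) + 2 := fun i hi => by
          have := hb i hi
          have : i ≠ m + 2 := fun h => htop (by rwa [h] at hi)
          omega
        have h := ih (m - 1) (by omega) S ⟨h3, hcons⟩ hbd
        have : m - 1 + 3 = m + 2 := by omega
        rw [this] at h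
        exact lt_of_lt_of_le h (trib_le_succ (m + 2) (by omega))

lemma sum_lt_trib' {S : Finset ℕ} {k : ℕ} (hS : IsTribRep S) (hk : 2 ≤ k)
    (hb : ∀ i ∈ S, i ≤ k) : ∑ i ∈ S, trib i < trib (k + 1) := by
  have := sum_lt_trib (k - 2) S hS (fun i hi => by have := hb i hi; omega)
  have h2 : k - 2 + 3 = k + 1 := by omega
  rwa [h2] at this

lemma sum_pos {S : Finset ℕ} (hS : IsTribRep S) (hne : S.Nonempty) :
    0 < ∑ i ∈ S, trib i := by
  obtain ⟨a, ha⟩ := hne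
  have h1 : trib a ≤ ∑ i ∈ S, trib i :=
    Finset.single_le_sum (fun i _ => Nat.zero_le _) ha
  have h2 : 3 ≤ a := hS.1 a ha
  have h3 : 0 < trib a := by
    have h := trib_pos (a - 2)
    rwa [show a - 2 + 2 = a by omega] at h
  omega

lemma exists_rep : ∀ n : ℕ, ∃ S : Finset ℕ, IsTribRep S ∧ n = ∑ i ∈ S, trib i := by
  intro n
  induction n using Nat.strong_induction_on with
  | _ n ih =>
    rcases Nat.eq_zero_or_pos n with h0 | hn
    · exact ⟨∅, ⟨fun i hi => absurd hi (Finset.notMem_empty i),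
        fun i ⟨a, _, _⟩ => absurd a (Finset.notMem_empty i)⟩, by simp [h0]⟩
    set P : ℕ → Prop := fun j => trib j ≤ n with hP
    set k := Nat.findGreatest P (n + 3) with hk
    have hP3 : P 3 := by show trib 3 ≤ n; show 1 ≤ n; omega
    have hk3 : 3 ≤ k := Nat.le_findGreatest (by omega) hP3
    have hkspec : trib k ≤ n := Nat.findGreatest_spec (P := P) (by omega) hP3
    have hkub : k ≤ n + 2 := by
      by_contra h
      have hkn3 : k = n + 3 := by
        have : k ≤ n + 3 := Nat.findGreatest_le (n + 3)
        omega
      have := trib_ge n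
      rw [hkn3] at hkspec
      omega
    have hgt : n < trib (k + 1) := by
      have := Nat.findGreatest_is_greatest (P := P) (n := n + 3) (k := k + 1)
        (by omega) (by omega)
      omega
    have htk : 0 < trib k := by
      have h := trib_pos (k - 2)
      rwa [show k - 2 + 2 = k by omega] at h
    obtain ⟨S', hS'rep, hS'sum⟩ := ih (n - trib k) (by omega)
    -- the key inequality: n - trib k < trib (k-1) + trib (k-2)
    have hexp : trib (k + 1) = trib k + trib (k - 1) + trib (k - 2) := by
      have := trib_add3 (k - 2)
      have e1 : k - 2 + 3 = k + 1 := by omega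
      have e2 : k - 2 + 2 = k := by omega
      have e3 : k - 2 + 1 = k - 1 := by omega
      rw [e1, e2, e3] at this
      exact this
    have hsmall : n - trib k < trib (k - 1) + trib (k - 2) := by omega
    have hlt_tk : n - trib k < trib k := by
      have h1 : trib (k - 1) + trib (k - 2) ≤ trib k := by
        rcases Nat.lt_or_ge k 4 with h4 | h4
        · interval_cases k <;> decide
        · have := trib_add3 (k - 3)
          have e1 : k - 3 + 3 = k := by omega
          have e2 : k - 3 + 2 = k - 1 := by omega
          have e3 : k - 3 + 1 = k - 2 := by omega
          rw [e1, e2, e3] at this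
          omega
      omega
    have hbound : ∀ j ∈ S', j < k := by
      intro j hj
      by_contra h
      push_neg at h
      have h3j : 3 ≤ j := hS'rep.1 j hj
      have h1 : trib j ≤ ∑ i ∈ S', trib i :=
        Finset.single_le_sum (fun i _ => Nat.zero_le _) hj
      have h2 : trib k ≤ trib j := trib_mono (by omega) h
      omega
    have hknot : k ∉ S' := fun h => absurd (hbound k h) (lt_irrefl k)
    have hnotboth : ¬(k - 2 ∈ S' ∧ k - 1 ∈ S') := by
      rintro ⟨h1, h2⟩
      have hsub : ({k - 2, k - 1} : Finset ℕ) ⊆ S' := by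
        intro x hx
        simp only [Finset.mem_insert, Finset.mem_singleton] at hx
        rcases hx with rfl | rfl <;> assumption
      have hsum : ∑ i ∈ ({k - 2, k - 1} : Finset ℕ), trib i = trib (k - 2) + trib (k - 1) := by
        rw [Finset.sum_insert (by simp; omega), Finset.sum_singleton]
      have := Finset.sum_le_sum_of_subset (f := trib) hsub
      omega
    refine ⟨insert k S', ⟨?_, ?_⟩, ?_⟩
    · intro i hi
      rcases Finset.mem_insert.mp hi with rfl | hi
      · exact hk3
      · exact hS'rep.1 i hi
    · rintro i ⟨ha, hb, hc⟩
      have H : ∀ j, j ∈ insert k S' → j ≤ k := by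
        intro j hj
        rcases Finset.mem_insert.mp hj with rfl | hj
        · exact le_refl k
        · exact le_of_lt (hbound j hj)
      have hik : i + 2 ≤ k := H _ hc
      have ha' : i ∈ S' := by
        rcases Finset.mem_insert.mp ha with h | h
        · omega
        · exact h
      have hb' : i + 1 ∈ S' := by
        rcases Finset.mem_insert.mp hb with h | h
        · omega
        · exact h
      rcases Finset.mem_insert.mp hc with h | h
      · exact hnotboth ⟨by rwa [show k - 2 = i by omega],
          by rwa [show k - 1 = i + 1 by omega]⟩
      · exact hS'rep.2 i ⟨ha', hb', h⟩
    · rw [Finset.sum_insert hknot]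
      omega

lemma rep_unique : ∀ n : ℕ, ∀ S T : Finset ℕ, IsTribRep S → IsTribRep T →
    ∑ i ∈ S, trib i = n → ∑ i ∈ T, trib i = n → S = T := by
  intro n
  induction n using Nat.strong_induction_on with
  | _ n ih =>
    intro S T hS hT hSn hTn
    rcases Nat.eq_zero_or_pos n with h0 | hn
    · subst h0
      have hSe : S = ∅ := by
        by_contra h
        have := sum_pos hS (Finset.nonempty_iff_ne_empty.mpr h)
        omega
      have hTe : T = ∅ := by
        by_contra h
        have := sum_pos hT (Finset.nonempty_iff_ne_empty.mpr h)
        omega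
      rw [hSe, hTe]
    · have hSne : S.Nonempty := by
        by_contra h
        rw [Finset.not_nonempty_iff_eq_empty] at h
        rw [h] at hSn; simp at hSn; omega
      have hTne : T.Nonempty := by
        by_contra h
        rw [Finset.not_nonempty_iff_eq_empty] at h
        rw [h] at hTn; simp at hTn; omega
      set a := S.max' hSne with ha
      set b := T.max' hTne with hb
      have ha3 : 3 ≤ a := hS.1 a (S.max'_mem hSne)
      have hb3 : 3 ≤ b := hT.1 b (T.max'_mem hTne)
      have hSlt : n < trib (a + 1) := by
        rw [← hSn]
        exact sum_lt_trib' hS (by omega) (fun i hi => S.le_max' i hi)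
      have hTlt : n < trib (b + 1) := by
        rw [← hTn]
        exact sum_lt_trib' hT (by omega) (fun i hi => T.le_max' i hi)
      have htbn : trib b ≤ n := by
        rw [← hTn]
        exact Finset.single_le_sum (fun i _ => Nat.zero_le _) (T.max'_mem hTne)
      have htan : trib a ≤ n := by
        rw [← hSn]
        exact Finset.single_le_sum (fun i _ => Nat.zero_le _) (S.max'_mem hSne)
      have hba : b ≤ a := by
        by_contra h
        push_neg at h
        have : trib (a + 1) ≤ trib b := trib_mono (by omega) (by omega)
        omega
      have hab : a ≤ b := by
        by_contra h
        push_neg at h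
        have : trib (b + 1) ≤ trib a := trib_mono (by omega) (by omega)
        omega
      have hbeq : b = a := by omega
      have haS : S.max' hSne ∈ S := S.max'_mem hSne
      have hbS : b ∈ S := by rw [hbeq]; exact haS
      have hta : 0 < trib b := by
        have h := trib_pos (b - 2)
        rwa [show b - 2 + 2 = b by omega] at h
      have erS : IsTribRep (S.erase b) := by
        refine ⟨fun i hi => hS.1 i (Finset.mem_of_mem_erase hi), ?_⟩
        rintro i ⟨x, y, z⟩
        exact hS.2 i ⟨Finset.mem_of_mem_erase x, Finset.mem_of_mem_erase y,
          Finset.mem_of_mem_erase z⟩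
      have erT : IsTribRep (T.erase b) := by
        refine ⟨fun i hi => hT.1 i (Finset.mem_of_mem_erase hi), ?_⟩
        rintro i ⟨x, y, z⟩
        exact hT.2 i ⟨Finset.mem_of_mem_erase x, Finset.mem_of_mem_erase y,
          Finset.mem_of_mem_erase z⟩
      have hsS : trib b + ∑ i ∈ S.erase b, trib i = n := by
        rw [Finset.add_sum_erase _ trib hbS]; exact hSn
      have hsT : trib b + ∑ i ∈ T.erase b, trib i = n := by
        rw [Finset.add_sum_erase _ trib (T.max'_mem hTne)]; exact hTn
      have heq := ih (n - trib b) (by omega) (S.erase b) (T.erase b) erS erT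
        (by omega) (by omega)
      have h1 : S = insert b (S.erase b) := (Finset.insert_erase hbS).symm
      have h2 : T = insert b (T.erase b) := (Finset.insert_erase (T.max'_mem hTne)).symm
      rw [h1, h2, heq]

/-- Every positive integer has a unique Tribonacci representation. -/
theorem trib_rep_exists_unique (n : ℕ) (hn : 0 < n) :
    ∃! S : Finset ℕ, IsTribRep S ∧ n = ∑ i ∈ S, trib i := by
  obtain ⟨S, hS, hsum⟩ := exists_rep n
  refine ⟨S, ⟨hS, hsum⟩, ?_⟩
  rintro T ⟨hT, hTsum⟩
  exact rep_unique n T S hT hS hTsum.symm hsum.symm
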